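/- arXiv:1402.6017 — 2 statements merged into one kernel-verified Lean document; each statement's English description precedes it below -/
import Mathlib

section
/- Let Γ be a finite metric tree and ν a finitely supported probability measure on Γ whose support points all have ν-mass that is an integer multiple of 1/(d-1), where d is even. Then the barycenter of ν (set of Q such that each component of Γ \ {Q} has ν-mass ≤ 1/2) consists of a single point. -/
open Set Metric

noncomputable section

namespace TreeBary

variable {X : Type*} [TopologicalSpace X]

/-- Subpath of a path between two real parameters. -/
def subPath {x y : X} (γ : Path x y) (a b : ℝ) : Path (γ.extend a) (γ.extend b) where
  toFun t := γ.extend (a + (t : ℝ) * (b - a))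
  continuous_toFun := γ.continuous_extend.comp (by fun_prop)
  source' := by simp
  target' := by simp

lemma subPath_apply {x y : X} (γ : Path x y) (a b : ℝ) (t : unitInterval) :
    (subPath γ a b) t = γ.extend (a + (t : ℝ) * (b - a)) := rfl

lemma convex_mem_Icc {a b s : ℝ} (ha : a ∈ Icc (0:ℝ) 1) (hb : b ∈ Icc (0:ℝ) 1)
    (hs : s ∈ Icc (0:ℝ) 1) : a + s * (b - a) ∈ Icc (0:ℝ) 1 := by
  obtain ⟨ha0, ha1⟩ := ha; obtain ⟨hb0, hb1⟩ := hb; obtain ⟨hs0, hs1⟩ := hs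
  constructor <;> nlinarith

lemma extend_injOn {x y : X} {γ : Path x y} (hγ : Function.Injective ⇑γ) :
    InjOn γ.extend (Icc (0:ℝ) 1) := by
  intro u hu v hv h
  rw [γ.extend_apply hu, γ.extend_apply hv] at h
  exact congrArg Subtype.val (hγ h)

lemma subPath_injective {x y : X} {γ : Path x y} (hγ : Function.Injective ⇑γ) {a b : ℝ}
    (ha : a ∈ Icc (0:ℝ) 1) (hb : b ∈ Icc (0:ℝ) 1) (hab : a ≠ b) :
    Function.Injective ⇑(subPath γ a b) := by
  intro s t h
  rw [subPath_apply, subPath_apply] at h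
  have := extend_injOn hγ (convex_mem_Icc ha hb s.2) (convex_mem_Icc ha hb t.2) h
  have hba : b - a ≠ 0 := sub_ne_zero.2 (Ne.symm hab)
  ext
  have : (s : ℝ) * (b - a) = (t : ℝ) * (b - a) := by linarith
  exact mul_right_cancel₀ hba this

lemma subPath_range {x y : X} (γ : Path x y) {a b : ℝ}
    (ha : a ∈ Icc (0:ℝ) 1) (hb : b ∈ Icc (0:ℝ) 1) :
    range ⇑(subPath γ a b) ⊆ range ⇑γ := by
  rintro c ⟨t, rfl⟩
  rw [subPath_apply, γ.extend_apply (convex_mem_Icc ha hb t.2)]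
  exact mem_range_self _

lemma subPath_range_eq {x y : X} (γ : Path x y) {a b : ℝ} (hab : a ≤ b) :
    range ⇑(subPath γ a b) = γ.extend '' (Icc a b) := by
  apply Set.eq_of_subset_of_subset
  · rintro c ⟨t, rfl⟩
    rw [subPath_apply]
    refine ⟨a + (t:ℝ) * (b - a), ⟨?_, ?_⟩, rfl⟩
    · nlinarith [t.2.1, t.2.2]
    · nlinarith [t.2.1, t.2.2]
  · rintro c ⟨u, ⟨hu1, hu2⟩, rfl⟩
    rcases eq_or_lt_of_le hab with rfl | hlt
    · refine ⟨0, ?_⟩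
      rw [subPath_apply]
      norm_num
      congr 1
      linarith
    · refine ⟨⟨(u - a)/(b - a), ?_, ?_⟩, ?_⟩
      · apply div_nonneg (by linarith) (by linarith)
      · rw [div_le_one (by linarith)]; linarith
      · rw [subPath_apply]
        congr 1
        show a + (u - a)/(b - a) * (b - a) = u
        rw [div_mul_eq_mul_div, mul_div_assoc, div_self (by linarith : b - a ≠ 0), mul_one]
        ring

lemma symm_injective {x y : X} {γ : Path x y} (hγ : Function.Injective ⇑γ) :
    Function.Injective ⇑γ.symm := by
  intro s t h
  have h2 := hγ (by simpa [Path.symm_apply] using h)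
  have h3 : (unitInterval.symm s : ℝ) = unitInterval.symm t := congrArg Subtype.val h2
  simp only [unitInterval.coe_symm_eq] at h3
  ext
  linarith

lemma trans_injective {x y z : X} {p : Path x y} {q : Path y z}
    (hp : Function.Injective ⇑p) (hq : Function.Injective ⇑q)
    (hint : range ⇑p ∩ range ⇑q ⊆ {y}) : Function.Injective ⇑(p.trans q) := by
  intro s t h
  rw [Path.trans_apply, Path.trans_apply] at h
  split_ifs at h with hs ht ht
  · have := congrArg Subtype.val (hp h); ext; dsimp at this; linarith
  · -- s ≤ 1/2 < t, p _ = q _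
    have hmem : p ⟨2 * (s:ℝ), _⟩ ∈ range ⇑p ∩ range ⇑q :=
      ⟨mem_range_self _, by rw [h]; exact mem_range_self _⟩
    have h1 := hint hmem
    rw [mem_singleton_iff] at h1
    have h2 := h.symm.trans h1
    have e1' : 2 * (s:ℝ) = 1 := congrArg Subtype.val (hp (h1.trans p.target.symm))
    have e2' : 2 * (t:ℝ) - 1 = 0 := congrArg Subtype.val (hq (h2.trans q.source.symm))
    ext; linarith
  · have hmem : q ⟨2 * (s:ℝ) - 1, _⟩ ∈ range ⇑p ∩ range ⇑q :=
      ⟨by rw [h]; exact mem_range_self _, mem_range_self _⟩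
    have h1 := hint hmem
    rw [mem_singleton_iff] at h1
    have h2 := h.symm.trans h1
    have e1' : 2 * (s:ℝ) - 1 = 0 := congrArg Subtype.val (hq (h1.trans q.source.symm))
    have e2' : 2 * (t:ℝ) = 1 := congrArg Subtype.val (hp (h2.trans p.target.symm))
    ext; linarith
  · have := congrArg Subtype.val (hq h); ext; dsimp at this; linarith


section Surgery
variable {X : Type*} [TopologicalSpace X] [T2Space X]

theorem surg2 {x z y : X} (p : Path x z) (q : Path z y)
    (hp : Function.Injective ⇑p) (hq : Function.Injective ⇑q) (hxy : x ≠ y) :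
    ∃ r : Path x y, Function.Injective ⇑r ∧ range ⇑r ⊆ range ⇑p ∪ range ⇑q := by
  classical
  set T : Set ℝ := Icc (0:ℝ) 1 ∩ p.extend ⁻¹' (range ⇑q) with hTdef
  have hTclosed : IsClosed T :=
    isClosed_Icc.inter ((isCompact_range q.continuous).isClosed.preimage p.continuous_extend)
  have hT1 : (1:ℝ) ∈ T := by
    refine ⟨⟨zero_le_one, le_refl 1⟩, ?_⟩
    rw [mem_preimage, p.extend_one]
    exact ⟨0, q.source⟩
  have hTne : T.Nonempty := ⟨1, hT1⟩
  have hTbdd : BddBelow T := ⟨0, fun t ht => ht.1.1⟩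
  set t0 := sInf T with ht0def
  have ht0T : t0 ∈ T := hTclosed.csInf_mem hTne hTbdd
  have ht0mem : t0 ∈ Icc (0:ℝ) 1 := ht0T.1
  obtain ⟨sI, hsI⟩ := ht0T.2
  have hle : ∀ u, u ∈ Icc (0:ℝ) 1 → p.extend u ∈ range ⇑q → t0 ≤ u :=
    fun u hu hmem => csInf_le hTbdd ⟨hu, hmem⟩
  have h0mem : (0:ℝ) ∈ Icc (0:ℝ) 1 := ⟨le_refl 0, zero_le_one⟩
  have h1mem : (1:ℝ) ∈ Icc (0:ℝ) 1 := ⟨zero_le_one, le_refl 1⟩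
  have hq1 : q.extend 1 = y := q.extend_one
  by_cases h0 : t0 = 0
  · -- x ∈ range q : take the tail of q from sI
    have hx : q.extend (sI : ℝ) = x := by
      rw [q.extend_extends', hsI, h0, p.extend_zero]
    have hs1 : (sI : ℝ) ≠ 1 := by
      intro he
      apply hxy
      rw [← hx, he, q.extend_one]
    refine ⟨(subPath q (sI : ℝ) 1).cast hx.symm hq1.symm, ?_, ?_⟩
    · rw [Path.cast_coe]
      exact subPath_injective hq sI.2 h1mem hs1
    · rw [Path.cast_coe]
      exact (subPath_range q sI.2 h1mem).trans subset_union_right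
  · by_cases hwy : p.extend t0 = y
    · have hx : p.extend 0 = x := p.extend_zero
      refine ⟨(subPath p 0 t0).cast hx.symm hwy.symm, ?_, ?_⟩
      · rw [Path.cast_coe]
        exact subPath_injective hp h0mem ht0mem (Ne.symm h0)
      · rw [Path.cast_coe]
        exact (subPath_range p h0mem ht0mem).trans subset_union_left
    · -- main case
      have hs1 : (sI : ℝ) ≠ 1 := by
        intro he
        apply hwy
        rw [← hsI]
        have : sI = (1 : unitInterval) := Subtype.ext he
        rw [this, q.target]
      have hj : p.extend t0 = q.extend (sI : ℝ) := by rw [q.extend_extends', hsI]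
      set P1 : Path (p.extend 0) (p.extend t0) := subPath p 0 t0 with hP1
      set P2 : Path (p.extend t0) (q.extend 1) := (subPath q (sI:ℝ) 1).cast hj rfl with hP2
      have hP2coe : ⇑P2 = ⇑(subPath q (sI:ℝ) 1) := Path.cast_coe _ _ _
      have hinjP1 : Function.Injective ⇑P1 := subPath_injective hp h0mem ht0mem (Ne.symm h0)
      have hinjP2 : Function.Injective ⇑P2 := by
        rw [hP2coe]; exact subPath_injective hq sI.2 h1mem hs1
      have hint : range ⇑P1 ∩ range ⇑P2 ⊆ {p.extend t0} := by
        rintro c ⟨hc1, hc2⟩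
        rw [hP1, subPath_range_eq p ht0mem.1] at hc1
        obtain ⟨u, hu, rfl⟩ := hc1
        have hcq : p.extend u ∈ range ⇑q := by
          rw [hP2coe] at hc2
          exact subPath_range q sI.2 h1mem hc2
        have : t0 ≤ u := hle u ⟨hu.1, le_trans hu.2 ht0mem.2⟩ hcq
        have : u = t0 := le_antisymm hu.2 this
        rw [this]; rfl
      refine ⟨(P1.trans P2).cast p.extend_zero.symm hq1.symm, ?_, ?_⟩
      · rw [Path.cast_coe]
        exact trans_injective hinjP1 hinjP2 hint
      · rw [Path.cast_coe, Path.trans_range]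
        apply union_subset
        · exact (subPath_range p h0mem ht0mem).trans subset_union_left
        · rw [hP2coe]
          exact (subPath_range q sI.2 h1mem).trans subset_union_right

end Surgery

section Chain
variable {Γ : Type*} [MetricSpace Γ]

/-- Near any point, points are joined to it by small injective paths (via the segment cover). -/
theorem star_lemma {n : ℕ} (φ : Fin n → Set Γ) (hcov : (⋃ i, φ i) = Set.univ)
    (hiso : ∀ i, ∃ (a b : ℝ) (e : Set.Icc a b → Γ), Isometry e ∧ range e = φ i)
    (z : Γ) :
    ∃ δ > 0, ∀ w, dist w z < δ → w ≠ z →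
      ∃ p : Path w z, Function.Injective ⇑p ∧ range ⇑p ⊆ closedBall z (dist w z) := by
  classical
  have hz : z ∈ ⋃ i, φ i := hcov ▸ mem_univ z
  obtain ⟨i0, hi0⟩ := mem_iUnion.1 hz
  haveI : Nonempty (Fin n) := ⟨i0⟩
  have hclosed : ∀ i, IsClosed (φ i) := by
    intro i
    obtain ⟨a, b, e, he, hre⟩ := hiso i
    rw [← hre]
    exact (isCompact_range he.continuous).isClosed
  set g : Fin n → ℝ := fun i => if z ∈ φ i ∨ ¬ (φ i).Nonempty then 1 else infDist z (φ i) with hg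
  have hgpos : ∀ i, 0 < g i := by
    intro i
    rw [hg]
    dsimp only
    split_ifs with h
    · exact one_pos
    · push_neg at h
      exact ((hclosed i).notMem_iff_infDist_pos h.2).1 h.1
  set δ : ℝ := Finset.univ.inf' Finset.univ_nonempty g with hδ
  have hδpos : 0 < δ := by
    rw [hδ, Finset.lt_inf'_iff]
    exact fun i _ => hgpos i
  refine ⟨δ, hδpos, ?_⟩
  intro w hw hne
  have hwmem : w ∈ ⋃ i, φ i := hcov ▸ mem_univ w
  obtain ⟨i, hwi⟩ := mem_iUnion.1 hwmem
  have hzi : z ∈ φ i := by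
    by_contra hzi
    have hgi : g i = infDist z (φ i) := by
      rw [hg]
      dsimp only
      rw [if_neg]
      push_neg
      exact ⟨hzi, ⟨w, hwi⟩⟩
    have h1 : infDist z (φ i) ≤ dist z w := infDist_le_dist_of_mem hwi
    have h2 : δ ≤ g i := Finset.inf'_le _ (Finset.mem_univ i)
    rw [dist_comm] at h1
    rw [hgi] at h2
    linarith
  obtain ⟨a, b, e, he, hre⟩ := hiso i
  rw [← hre] at hzi hwi
  obtain ⟨tz, htz⟩ := hzi
  obtain ⟨tw, htw⟩ := hwi
  have htwz : (tw : ℝ) ≠ (tz : ℝ) := by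
    intro hcontra
    exact hne (by rw [← htw, ← htz]; exact congrArg e (Subtype.ext hcontra))
  have hconv : ∀ s : unitInterval, (1 - (s:ℝ)) * tw + (s:ℝ) * tz ∈ Set.Icc a b := by
    intro s
    constructor
    · nlinarith [tw.2.1, tz.2.1, s.2.1, s.2.2]
    · nlinarith [tw.2.2, tz.2.2, s.2.1, s.2.2]
  set f : unitInterval → Γ := fun s => e ⟨(1 - (s:ℝ)) * tw + (s:ℝ) * tz, hconv s⟩ with hf
  have hfcont : Continuous f := by
    apply he.continuous.comp
    apply Continuous.subtype_mk
    fun_prop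
  set p : Path w z :=
    { toFun := f
      continuous_toFun := hfcont
      source' := by
        show f 0 = w
        refine (congrArg e (Subtype.ext ?_)).trans htw
        show (1 - ((0:unitInterval):ℝ)) * tw + ((0:unitInterval):ℝ) * tz = tw
        norm_num
      target' := by
        show f 1 = z
        refine (congrArg e (Subtype.ext ?_)).trans htz
        show (1 - ((1:unitInterval):ℝ)) * tw + ((1:unitInterval):ℝ) * tz = tz
        norm_num } with hp
  have hpcoe : ∀ s, p s = f s := fun s => rfl
  refine ⟨p, ?_, ?_⟩
  · intro s t hst
    rw [hpcoe, hpcoe, hf] at hst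
    have h2 := he.injective hst
    have h3 : (1 - (s:ℝ)) * tw + (s:ℝ) * tz = (1 - (t:ℝ)) * tw + (t:ℝ) * tz :=
      congrArg Subtype.val h2
    have h4 : ((s:ℝ) - (t:ℝ)) * ((tz:ℝ) - tw) = 0 := by linarith
    rcases mul_eq_zero.1 h4 with h5 | h5
    · exact Subtype.ext (by linarith)
    · exact absurd (by linarith) htwz
  · rintro c ⟨s, rfl⟩
    rw [hpcoe, hf]
    dsimp only
    rw [mem_closedBall, ← htz, ← htw, he.dist_eq, he.dist_eq]
    rw [Subtype.dist_eq, Subtype.dist_eq]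
    dsimp only
    rw [Real.dist_eq, Real.dist_eq]
    have h6 : (1 - (s:ℝ)) * tw + (s:ℝ) * tz - tz = (1 - (s:ℝ)) * ((tw:ℝ) - tz) := by ring
    rw [h6, abs_mul, abs_of_nonneg (by nlinarith [s.2.2] : (0:ℝ) ≤ 1 - (s:ℝ))]
    nlinarith [abs_nonneg ((tw:ℝ) - tz), s.2.1, s.2.2]

/-- Arc connectivity inside components. -/
theorem chain_arc {n : ℕ} (φ : Fin n → Set Γ) (hcov : (⋃ i, φ i) = Set.univ)
    (hiso : ∀ i, ∃ (a b : ℝ) (e : Set.Icc a b → Γ), Isometry e ∧ range e = φ i)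
    (U : Set Γ) (x : Γ)
    (hU : ∀ z ∈ connectedComponentIn U x, ∃ ρ > 0, closedBall z ρ ⊆ U)
    {y : Γ} (hy : y ∈ connectedComponentIn U x) (hxy : x ≠ y) :
    ∃ p : Path x y, Function.Injective ⇑p ∧ range ⇑p ⊆ U := by
  classical
  set E := connectedComponentIn U x with hE
  have hxU : x ∈ U := connectedComponentIn_nonempty_iff.1 ⟨y, hy⟩
  have hxE : x ∈ E := mem_connectedComponentIn hxU
  set R : Set Γ := {w | w = x ∨ ∃ p : Path x w, Function.Injective ⇑p ∧ range ⇑p ⊆ U} with hR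
  have key : ∀ z, z ∈ E → ∃ ε, 0 < ε ∧
      ∀ w, dist w z < ε → w ≠ z → ∃ p : Path w z, Function.Injective ⇑p ∧ range ⇑p ⊆ U := by
    intro z hz
    obtain ⟨ρ, hρpos, hρ⟩ := hU z hz
    obtain ⟨δ, hδpos, hδ⟩ := star_lemma φ hcov hiso z
    refine ⟨min δ ρ, lt_min hδpos hρpos, ?_⟩
    intro w hw hne
    obtain ⟨p, hpi, hpr⟩ := hδ w (lt_of_lt_of_le hw (min_le_left _ _)) hne
    refine ⟨p, hpi, hpr.trans ?_⟩
    exact (closedBall_subset_closedBall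
      (le_of_lt (lt_of_lt_of_le hw (min_le_right _ _)))).trans hρ
  choose! ε hεpos hεarc using key
  have step : ∀ w, w ∈ E → w ∈ R → ∀ w', dist w' w < ε w → w' ∈ R := by
    intro w hwE hwR w' hd
    by_cases hww' : w' = w
    · rwa [hww']
    obtain ⟨q, hqi, hqr⟩ := hεarc w hwE w' hd hww'
    rcases hwR with rfl | ⟨p, hpi, hpr⟩
    · exact Or.inr ⟨q.symm, symm_injective hqi, by rw [Path.symm_range]; exact hqr⟩
    · by_cases hxw' : x = w'
      · exact Or.inl hxw'.symm
      obtain ⟨r, hri, hrr⟩ := surg2 p q.symm hpi (symm_injective hqi) hxw'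
      refine Or.inr ⟨r, hri, hrr.trans (union_subset hpr ?_)⟩
      rw [Path.symm_range]; exact hqr
  have step' : ∀ w, w ∈ E → ∀ w', w' ∈ R → dist w' w < ε w → w ∈ R := by
    intro w hwE w' hw'R hd
    by_cases hww' : w' = w
    · rwa [← hww']
    obtain ⟨q, hqi, hqr⟩ := hεarc w hwE w' hd hww'
    rcases hw'R with rfl | ⟨p, hpi, hpr⟩
    · exact Or.inr ⟨q, hqi, hqr⟩
    · by_cases hxw : x = w
      · exact Or.inl hxw.symm
      obtain ⟨r, hri, hrr⟩ := surg2 p q hpi hqi hxw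
      exact Or.inr ⟨r, hri, hrr.trans (union_subset hpr hqr)⟩
  set A : Set Γ := ⋃ (w : {w // w ∈ E ∧ w ∈ R}), ball w.1 (ε w.1) with hA
  set B : Set Γ := ⋃ (w : {w // w ∈ E ∧ w ∉ R}), ball w.1 (ε w.1) with hB
  have hAopen : IsOpen A := isOpen_iUnion fun _ => isOpen_ball
  have hBopen : IsOpen B := isOpen_iUnion fun _ => isOpen_ball
  have hEAB : E ⊆ A ∪ B := by
    intro w hw
    by_cases hwR : w ∈ R
    · exact Or.inl (mem_iUnion.2 ⟨⟨w, hw, hwR⟩, mem_ball_self (hεpos w hw)⟩)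
    · exact Or.inr (mem_iUnion.2 ⟨⟨w, hw, hwR⟩, mem_ball_self (hεpos w hw)⟩)
  have hABempty : ¬ (E ∩ (A ∩ B)).Nonempty := by
    rintro ⟨c, _, hcA, hcB⟩
    obtain ⟨w, hcw⟩ := mem_iUnion.1 hcA
    obtain ⟨w', hcw'⟩ := mem_iUnion.1 hcB
    have hcR : c ∈ R := step w.1 w.2.1 w.2.2 c (mem_ball.1 hcw)
    exact w'.2.2 (step' w'.1 w'.2.1 c hcR (mem_ball.1 hcw'))
  have hEB : ¬ (E ∩ B).Nonempty := by
    intro hEBne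
    exact hABempty (isPreconnected_connectedComponentIn A B hAopen hBopen hEAB
      ⟨x, hxE, mem_iUnion.2 ⟨⟨x, hxE, Or.inl rfl⟩, mem_ball_self (hεpos x hxE)⟩⟩ hEBne)
  have hER : E ⊆ R := by
    intro w hw
    rcases hEAB hw with hwA | hwB
    · obtain ⟨w₀, hww₀⟩ := mem_iUnion.1 hwA
      exact step w₀.1 w₀.2.1 w₀.2.2 w (mem_ball.1 hww₀)
    · exact absurd ⟨w, hw, hwB⟩ hEB
  rcases hER hy with rfl | hgood
  · exact absurd rfl hxy
  · exact hgood

end Chain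

section Sep
variable {Γ : Type*} [MetricSpace Γ]

lemma compIn_eq_of_mem {F : Set Γ} {a b z : Γ} (ha : z ∈ connectedComponentIn F a)
    (hb : z ∈ connectedComponentIn F b) :
    connectedComponentIn F a = connectedComponentIn F b :=
  (connectedComponentIn_eq ha).trans (connectedComponentIn_eq hb).symm

/-- The hypothesis needed by `chain_arc` for the complement of a point. -/
lemma hU_point {v : Γ} {x : Γ} :
    ∀ z ∈ connectedComponentIn ({v}ᶜ : Set Γ) x, ∃ ρ > 0, closedBall z ρ ⊆ ({v}ᶜ : Set Γ) := by
  intro z hz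
  have hzv : z ≠ v := mem_compl_singleton_iff.1 (connectedComponentIn_subset _ _ hz)
  have hd : 0 < dist z v := dist_pos.2 hzv
  refine ⟨dist z v / 2, by linarith, ?_⟩
  intro w hw
  rw [mem_closedBall] at hw
  rw [mem_compl_singleton_iff]
  intro hwv
  rw [hwv] at hw
  have : dist z v ≠ 0 := fun h => hzv (dist_eq_zero.1 h)
  rw [dist_comm] at hw
  have hd : 0 < dist z v := dist_pos.2 hzv
  linarith

/-- Separation: an interior point of an injective path separates its endpoints. -/
lemma separation {n : ℕ} {φ : Fin n → Set Γ} (hcov : (⋃ i, φ i) = Set.univ)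
    (hiso : ∀ i, ∃ (a b : ℝ) (e : Set.Icc a b → Γ), Isometry e ∧ range e = φ i)
    (huniq : ∀ (x y : Γ) (p q : Path x y), Function.Injective p →
      Function.Injective q → Set.range p = Set.range q)
    {x y : Γ} (γ : Path x y) (hγ : Function.Injective ⇑γ) {u v w : ℝ}
    (hu : 0 ≤ u) (huv : u < v) (hvw : v < w) (hw : w ≤ 1) :
    γ.extend w ∉ connectedComponentIn ({γ.extend v}ᶜ : Set Γ) (γ.extend u) := by
  intro hmem
  have humem : u ∈ Icc (0:ℝ) 1 := ⟨hu, by linarith⟩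
  have hwmem : w ∈ Icc (0:ℝ) 1 := ⟨by linarith, hw⟩
  have hne : γ.extend u ≠ γ.extend w := by
    intro h
    have := extend_injOn hγ humem hwmem h
    linarith
  obtain ⟨p, hpi, hpr⟩ := chain_arc φ hcov hiso ({γ.extend v}ᶜ) (γ.extend u) hU_point hmem hne
  have hq := huniq _ _ (subPath γ u w) p
    (subPath_injective hγ humem hwmem (by linarith)) hpi
  have hvmem : γ.extend v ∈ range ⇑(subPath γ u w) := by
    rw [subPath_range_eq γ (by linarith : u ≤ w)]
    exact ⟨v, ⟨le_of_lt huv, le_of_lt hvw⟩, rfl⟩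
  rw [hq] at hvmem
  exact (hpr hvmem) rfl

lemma separation' {n : ℕ} {φ : Fin n → Set Γ} (hcov : (⋃ i, φ i) = Set.univ)
    (hiso : ∀ i, ∃ (a b : ℝ) (e : Set.Icc a b → Γ), Isometry e ∧ range e = φ i)
    (huniq : ∀ (x y : Γ) (p q : Path x y), Function.Injective p →
      Function.Injective q → Set.range p = Set.range q)
    {x y : Γ} (γ : Path x y) (hγ : Function.Injective ⇑γ) {u v w : ℝ}
    (hu : 0 ≤ u) (huv : u < v) (hvw : v < w) (hw : w ≤ 1) :
    γ.extend u ∉ connectedComponentIn ({γ.extend v}ᶜ : Set Γ) (γ.extend w) := by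
  intro hmem
  have hwv : γ.extend w ≠ γ.extend v := by
    intro h
    have := extend_injOn hγ ⟨by linarith, hw⟩ ⟨by linarith, by linarith⟩ h
    linarith
  have h2 : γ.extend w ∈ connectedComponentIn ({γ.extend v}ᶜ : Set Γ) (γ.extend u) := by
    rw [← connectedComponentIn_eq hmem]
    exact mem_connectedComponentIn (mem_compl_singleton_iff.2 hwv)
  exact separation hcov hiso huniq γ hγ hu huv hvw hw h2

/-- A connected component of the complement of a point, together with that point,
is preconnected. -/
lemma comp_union_point (hpath : ∀ x y : Γ, Joined x y) {Q z : Γ} (hz : z ≠ Q) :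
    IsPreconnected (connectedComponentIn ({Q}ᶜ : Set Γ) z ∪ {Q}) := by
  set Dz := connectedComponentIn ({Q}ᶜ : Set Γ) z with hDz
  have hzD : z ∈ Dz := mem_connectedComponentIn (mem_compl_singleton_iff.2 hz)
  have hQcl : Q ∈ closure Dz := by
    obtain ⟨γ⟩ := hpath z Q
    set T : Set ℝ := Icc (0:ℝ) 1 ∩ γ.extend ⁻¹' {Q} with hT
    have hTcl : IsClosed T := isClosed_Icc.inter (isClosed_singleton.preimage γ.continuous_extend)
    have hT1 : (1:ℝ) ∈ T := ⟨⟨zero_le_one, le_refl 1⟩, by rw [mem_preimage, γ.extend_one]; rfl⟩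
    have hTne : T.Nonempty := ⟨1, hT1⟩
    have hTbdd : BddBelow T := ⟨0, fun t ht => ht.1.1⟩
    set t1 := sInf T with ht1
    have ht1T : t1 ∈ T := hTcl.csInf_mem hTne hTbdd
    have ht1Q : γ.extend t1 = Q := ht1T.2
    have ht1pos : 0 < t1 := by
      rcases lt_or_eq_of_le ht1T.1.1 with h | h
      · exact h
      · exfalso
        apply hz
        rw [← γ.extend_zero, h, ht1Q]
    have hS : γ.extend '' (Ico 0 t1) ⊆ Dz := by
      rw [hDz]
      apply IsPreconnected.subset_connectedComponentIn
      · exact isPreconnected_Ico.image _ γ.continuous_extend.continuousOn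
      · exact ⟨0, ⟨le_refl 0, ht1pos⟩, γ.extend_zero⟩
      · rintro _ ⟨t, ht, rfl⟩
        rw [mem_compl_singleton_iff]
        intro hcon
        have : t ∈ T := ⟨⟨ht.1, by linarith [ht.2, ht1T.1.2]⟩, by rw [mem_preimage, hcon]; rfl⟩
        have := csInf_le hTbdd this
        rw [← ht1] at this
        linarith [ht.2]
    have h5 : t1 ∈ closure (Ico 0 t1) := by
      rw [closure_Ico (ne_of_lt ht1pos)]
      exact ⟨le_of_lt ht1pos, le_refl t1⟩
    have h6 : γ.extend t1 ∈ closure (γ.extend '' (Ico 0 t1)) :=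
      image_closure_subset_closure_image γ.continuous_extend ⟨t1, h5, rfl⟩
    rw [ht1Q] at h6
    exact closure_mono hS h6
  exact isPreconnected_connectedComponentIn.subset_closure subset_union_left
    (union_subset subset_closure (singleton_subset_iff.2 hQcl))

end Sep

section Meas
open MeasureTheory
attribute [local instance] Classical.propDecidable
variable {Γ : Type*} [MetricSpace Γ] [MeasurableSpace Γ] [BorelSpace Γ]

lemma measure_eq_N (ν : Measure Γ) (s : Finset Γ) (hs : ν ((s : Set Γ))ᶜ = 0)
    (k : Γ → ℕ) (D : ℕ)
    (hk : ∀ P : Γ, ν {P} = (k P : ENNReal) / (D : ENNReal)) (A : Set Γ) :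
    ν A = ((∑ P ∈ s.filter (· ∈ A), k P : ℕ) : ENNReal) / (D : ENNReal) := by
  classical
  have h1 : ν A = ν (A ∩ ↑s) := by
    apply le_antisymm
    · calc ν A ≤ ν (A ∩ ↑s) + ν (A \ ↑s) := measure_le_inter_add_diff ν A ↑s
        _ ≤ ν (A ∩ ↑s) + ν ((↑s : Set Γ)ᶜ) :=
          add_le_add_right (measure_mono (fun x hx => hx.2)) _
        _ = ν (A ∩ ↑s) := by rw [hs, add_zero]
    · exact measure_mono inter_subset_left
  have h2 : A ∩ ↑s = ↑(s.filter (· ∈ A)) := by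
    ext P
    simp only [Finset.coe_filter, mem_inter_iff, Finset.mem_coe, mem_setOf_eq]
    tauto
  have h3 : (↑(s.filter (· ∈ A)) : Set Γ) = ⋃ P ∈ s.filter (· ∈ A), ({P} : Set Γ) := by
    ext P
    simp
  have h4 : ν ↑(s.filter (· ∈ A)) = ∑ P ∈ s.filter (· ∈ A), ν {P} := by
    rw [h3, measure_biUnion_finset ?_ (fun P _ => measurableSet_singleton P)]
    intro P _ Q _ hne
    simp [Set.disjoint_singleton, hne]
  rw [h1, h2, h4]
  simp_rw [hk]
  rw [Nat.cast_sum]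
  simp_rw [div_eq_mul_inv]
  rw [Finset.sum_mul]

lemma nat_div_le_half {m D : ℕ} (hD0 : (D:ENNReal) ≠ 0) (hDtop : (D:ENNReal) ≠ ⊤) :
    ((m : ENNReal) / (D : ENNReal) ≤ 1/2) ↔ 2 * m ≤ D := by
  rw [ENNReal.div_le_iff hD0 hDtop]
  rw [one_div, ← ENNReal.div_eq_inv_mul]
  rw [ENNReal.le_div_iff_mul_le (Or.inl (by norm_num)) (Or.inl (by norm_num))]
  constructor
  · intro h
    have h2 : ((2 * m : ℕ) : ENNReal) ≤ (D : ENNReal) := by push_cast; rw [mul_comm]; exact_mod_cast h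
    exact_mod_cast h2
  · intro h
    have h2 : ((2 * m : ℕ) : ENNReal) ≤ (D : ENNReal) := by exact_mod_cast h
    push_cast at h2
    rw [mul_comm] at h2
    exact h2

end Meas

end TreeBary

open MeasureTheory TreeBary Set Metric in
theorem TreeBary.stmt_9_aux {Γ : Type*} [MetricSpace Γ] [CompactSpace Γ]
    [MeasurableSpace Γ] [BorelSpace Γ]
    (hpath : ∀ x y : Γ, Joined x y)
    (huniq : ∀ (x y : Γ) (p q : Path x y), Function.Injective p →
      Function.Injective q → Set.range p = Set.range q)
    (hsegs : ∃ (n : ℕ) (φ : Fin n → Set Γ), (⋃ i, φ i) = Set.univ ∧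
      ∀ i, ∃ (a b : ℝ) (e : Set.Icc a b → Γ), Isometry e ∧ Set.range e = φ i)
    (ν : Measure Γ) [IsProbabilityMeasure ν]
    (hfin : ∃ s : Finset Γ, ν ((s : Set Γ))ᶜ = 0)
    (d : ℕ) (hd : 2 ≤ d) (heven : Even d)
    (hmass : ∀ P : Γ, ∃ k : ℕ, ν {P} = (k : ENNReal) / ((d : ENNReal) - 1)) :
    ∃! Q : Γ, ∀ x : Γ, x ≠ Q →
      ν (connectedComponentIn ({Q}ᶜ : Set Γ) x) ≤ 1 / 2 := by
  classical
  obtain ⟨n, φ, hcov, hiso⟩ := hsegs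
  obtain ⟨s, hs⟩ := hfin
  choose k hk0 using hmass
  -- nonemptiness
  have hne : Nonempty Γ := by
    by_contra h
    rw [not_nonempty_iff] at h
    have h1 : ν Set.univ = 1 := measure_univ
    rw [Set.univ_eq_empty_iff.2 h, measure_empty] at h1
    exact zero_ne_one h1
  -- universe is preconnected
  have hpreU : IsPreconnected (Set.univ : Set Γ) := by
    have hpc : IsPathConnected (Set.univ : Set Γ) := by
      refine ⟨hne.some, mem_univ _, ?_⟩
      intro y _
      exact ⟨(hpath hne.some y).somePath, fun t => mem_univ _⟩
    exact hpc.isConnected.isPreconnected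
  -- arithmetic setup
  obtain ⟨r, hr⟩ := heven
  set D : ℕ := d - 1 with hD
  have hd1 : (d : ENNReal) - 1 = (D : ENNReal) := by
    have hdD : d = D + 1 := by omega
    rw [hdD]
    push_cast
    rw [ENNReal.add_sub_cancel_right ENNReal.one_ne_top]
  have hk : ∀ P : Γ, ν {P} = (k P : ENNReal) / (D : ENNReal) := fun P => by
    rw [hk0 P, hd1]
  have hD0 : (D : ENNReal) ≠ 0 := Nat.cast_ne_zero.2 (by omega)
  have hDtop : (D : ENNReal) ≠ ⊤ := ENNReal.natCast_ne_top D
  set N : Set Γ → ℕ := fun A => ∑ P ∈ s.filter (· ∈ A), k P with hNdef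
  have hν : ∀ A : Set Γ, ν A = (N A : ENNReal) / (D : ENNReal) := fun A =>
    measure_eq_N ν s hs k D hk A
  have hhalf : ∀ A : Set Γ, ν A ≤ 1/2 ↔ 2 * N A ≤ D := fun A => by
    rw [hν A]; exact nat_div_le_half hD0 hDtop
  have hheavyIff : ∀ A : Set Γ, ¬ (ν A ≤ 1/2) ↔ D < 2 * N A := fun A => by
    rw [hhalf A, not_le]
  have hNuniv : N Set.univ = D := by
    have h := hν Set.univ
    rw [measure_univ] at h
    have h2 := (ENNReal.div_eq_one_iff hD0 hDtop).1 h.symm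
    exact_mod_cast h2
  have hsumD : ∑ P ∈ s, k P = D := by
    rw [← hNuniv, hNdef]
    dsimp only
    apply Finset.sum_congr ?_ (fun _ _ => rfl)
    ext P
    simp
  have hNmono : ∀ A B : Set Γ, A ⊆ B → N A ≤ N B := by
    intro A B h
    apply Finset.sum_le_sum_of_subset
    intro P hP
    rw [Finset.mem_filter] at hP ⊢
    exact ⟨hP.1, h hP.2⟩
  have hNdisj : ∀ A B : Set Γ, A ∩ B = ∅ → N A + N B ≤ D := by
    intro A B hAB
    have hdis : Disjoint (s.filter (· ∈ A)) (s.filter (· ∈ B)) := by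
      rw [Finset.disjoint_left]
      intro P hPA hPB
      rw [Finset.mem_filter] at hPA hPB
      have : P ∈ A ∩ B := ⟨hPA.2, hPB.2⟩
      rw [hAB] at this
      exact this
    have h2 : (s.filter (· ∈ A) ∪ s.filter (· ∈ B)) ⊆ s :=
      Finset.union_subset (Finset.filter_subset _ _) (Finset.filter_subset _ _)
    have h3 := Finset.sum_le_sum_of_subset (f := k) h2
    rw [Finset.sum_union hdis, hsumD] at h3
    simp only [hNdef]
    exact h3
  have hNcover : ∀ A B : Set Γ, (∀ z : Γ, z ∈ A ∨ z ∈ B) → D ≤ N A + N B := by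
    intro A B hAB
    have hsub : s ⊆ s.filter (· ∈ A) ∪ s.filter (· ∈ B) := by
      intro P hP
      rcases hAB P with h | h
      · exact Finset.mem_union_left _ (Finset.mem_filter.2 ⟨hP, h⟩)
      · exact Finset.mem_union_right _ (Finset.mem_filter.2 ⟨hP, h⟩)
    have h1 := Finset.sum_le_sum_of_subset (f := k) hsub
    have h2 : ∑ P ∈ (s.filter (· ∈ A) ∪ s.filter (· ∈ B)), k P ≤ N A + N B := by
      have e1 : s.filter (· ∈ A) ∪ s.filter (· ∈ B)
          = s.filter (· ∈ A) ∪ (s.filter (· ∈ B) \ s.filter (· ∈ A)) :=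
        (Finset.union_sdiff_self_eq_union).symm
      rw [e1, Finset.sum_union (Finset.disjoint_sdiff)]
      have h3 := Finset.sum_le_sum_of_subset (f := k)
        (Finset.sdiff_subset : s.filter (· ∈ B) \ s.filter (· ∈ A) ⊆ s.filter (· ∈ B))
      simp only [hNdef]
      omega
    rw [hsumD] at h1
    exact le_trans h1 h2
  -- MAIN EXISTENCE INDUCTION
  have main : ∀ (kk : ℕ) (Q y : Γ), y ≠ Q →
      ¬ (ν (connectedComponentIn ({Q}ᶜ : Set Γ) y) ≤ 1/2) →
      (s.filter (· ∈ connectedComponentIn ({Q}ᶜ : Set Γ) y)).card ≤ kk →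
      ∃ Qb : Γ, ∀ x : Γ, x ≠ Qb → ν (connectedComponentIn ({Qb}ᶜ : Set Γ) x) ≤ 1/2 := by
    intro kk
    induction kk with
    | zero =>
      intro Q y hyQ hheavy hcard
      exfalso
      apply hheavy
      rw [hhalf]
      have hfe : s.filter (· ∈ connectedComponentIn ({Q}ᶜ : Set Γ) y) = ∅ :=
        Finset.card_eq_zero.1 (Nat.le_zero.1 hcard)
      have : N (connectedComponentIn ({Q}ᶜ : Set Γ) y) = 0 := by
        rw [hNdef]
        dsimp only
        rw [hfe, Finset.sum_empty]
      omega
    | succ kk ih =>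
      intro Q y₀ hy₀Q hheavyC hcard
      rw [hheavyIff] at hheavyC
      -- pick a support point y in the heavy component C
      have hCne : (s.filter (· ∈ connectedComponentIn ({Q}ᶜ : Set Γ) y₀)).Nonempty := by
        by_contra h
        rw [Finset.not_nonempty_iff_eq_empty] at h
        have : N (connectedComponentIn ({Q}ᶜ : Set Γ) y₀) = 0 := by
          rw [hNdef]; dsimp only; rw [h, Finset.sum_empty]
        omega
      obtain ⟨y, hymem⟩ := hCne
      rw [Finset.mem_filter] at hymem
      obtain ⟨hys, hyC⟩ := hymem
      have hyQ : y ≠ Q := mem_compl_singleton_iff.1 (connectedComponentIn_subset _ _ hyC)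
      have hCy : connectedComponentIn ({Q}ᶜ : Set Γ) y
          = connectedComponentIn ({Q}ᶜ : Set Γ) y₀ := (connectedComponentIn_eq hyC).symm
      have hQy : Q ≠ y := Ne.symm hyQ
      -- the arc from Q to y
      obtain ⟨γ, hγi, -⟩ := chain_arc φ hcov hiso Set.univ Q
        (fun z _ => ⟨1, one_pos, subset_univ _⟩)
        (hpreU.subset_connectedComponentIn (mem_univ Q) (subset_univ _) (mem_univ y)) hQy
      have hext0 : γ.extend 0 = Q := γ.extend_zero
      have hext1 : γ.extend 1 = y := γ.extend_one
      have hinj := extend_injOn hγi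
      have hγC : ∀ t : ℝ, 0 < t → t ≤ 1 →
          γ.extend t ∈ connectedComponentIn ({Q}ᶜ : Set Γ) y₀ := by
        have himg : γ.extend '' (Ioc 0 1) ⊆ connectedComponentIn ({Q}ᶜ : Set Γ) y₀ := by
          rw [← hCy]
          apply IsPreconnected.subset_connectedComponentIn
          · exact isPreconnected_Ioc.image _ γ.continuous_extend.continuousOn
          · exact ⟨1, ⟨one_pos, le_refl 1⟩, hext1⟩
          · rintro _ ⟨t, ht, rfl⟩
            rw [mem_compl_singleton_iff]
            intro hcon
            have := hinj ⟨le_of_lt ht.1, ht.2⟩ ⟨le_refl 0, zero_le_one⟩ (by rw [hcon, hext0])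
            linarith [ht.1]
        intro t h0 h1
        exact himg ⟨t, ⟨h0, h1⟩, rfl⟩
      have hQne : ∀ t : ℝ, 0 < t → t ≤ 1 → Q ≠ γ.extend t := by
        intro t h0 h1 h
        exact (mem_compl_singleton_iff.1
          (connectedComponentIn_subset _ _ (hγC t h0 h1))) h.symm
      have hQB : ∀ t : ℝ, 0 < t → t ≤ 1 →
          Q ∈ connectedComponentIn ({γ.extend t}ᶜ : Set Γ) Q :=
        fun t h0 h1 => mem_connectedComponentIn (mem_compl_singleton_iff.2 (hQne t h0 h1))
      have hyne : ∀ t : ℝ, 0 ≤ t → t < 1 → y ≠ γ.extend t := by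
        intro t h0 h1 h
        have := hinj ⟨h0, le_of_lt h1⟩ ⟨zero_le_one, le_refl 1⟩ (by rw [← h, hext1])
        linarith
      have hyF : ∀ t : ℝ, 0 ≤ t → t < 1 →
          y ∈ connectedComponentIn ({γ.extend t}ᶜ : Set Γ) y :=
        fun t h0 h1 => mem_connectedComponentIn (mem_compl_singleton_iff.2 (hyne t h0 h1))
      have hsepB : ∀ t t' : ℝ, 0 < t → t < t' → t' ≤ 1 →
          γ.extend t' ∉ connectedComponentIn ({γ.extend t}ᶜ : Set Γ) Q := by
        intro t t' h0 htt' h1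
        have h2 := separation hcov hiso huniq γ hγi (le_refl 0) h0 htt' h1
        rwa [hext0] at h2
      have hBmono : ∀ t t' : ℝ, 0 < t → t ≤ t' → t' ≤ 1 →
          connectedComponentIn ({γ.extend t}ᶜ : Set Γ) Q
            ⊆ connectedComponentIn ({γ.extend t'}ᶜ : Set Γ) Q := by
        intro t t' h0 hle h1
        rcases eq_or_lt_of_le hle with rfl | hlt
        · exact subset_rfl
        have hnotin := hsepB t t' h0 hlt h1
        apply IsPreconnected.subset_connectedComponentIn isPreconnected_connectedComponentIn
          (hQB t h0 (by linarith))
        intro z hz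
        rw [mem_compl_singleton_iff]
        intro he
        exact hnotin (he ▸ hz)
      have hsepF : ∀ t t' : ℝ, 0 ≤ t → t < t' → t' < 1 →
          γ.extend t ∉ connectedComponentIn ({γ.extend t'}ᶜ : Set Γ) y := by
        intro t t' h0 htt' h1
        have h2 := separation' hcov hiso huniq γ hγi h0 htt' h1 (le_refl 1)
        rwa [hext1] at h2
      have hFmono : ∀ t t' : ℝ, 0 ≤ t → t ≤ t' → t' < 1 →
          connectedComponentIn ({γ.extend t'}ᶜ : Set Γ) y
            ⊆ connectedComponentIn ({γ.extend t}ᶜ : Set Γ) y := by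
        intro t t' h0 hle h1
        rcases eq_or_lt_of_le hle with rfl | hlt
        · exact subset_rfl
        have hnotin := hsepF t t' h0 hlt h1
        apply IsPreconnected.subset_connectedComponentIn isPreconnected_connectedComponentIn
          (hyF t' (by linarith) h1)
        intro z hz
        rw [mem_compl_singleton_iff]
        intro he
        exact hnotin (he ▸ hz)
      have hBFdisj : ∀ t : ℝ, 0 < t → t < 1 → ∀ z : Γ,
          z ∈ connectedComponentIn ({γ.extend t}ᶜ : Set Γ) Q →
          z ∉ connectedComponentIn ({γ.extend t}ᶜ : Set Γ) y := by
        intro t h0 h1 z hzB hzF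
        have heq := compIn_eq_of_mem hzB hzF
        have hyB : y ∈ connectedComponentIn ({γ.extend t}ᶜ : Set Γ) Q := by
          rw [heq]
          exact hyF t (le_of_lt h0) h1
        exact hsepB t 1 h0 h1 (le_refl 1) (by rwa [hext1])
      set L := {t : ℝ | 0 < t ∧ t ≤ 1 ∧
        2 * N (connectedComponentIn ({γ.extend t}ᶜ : Set Γ) Q) ≤ D} with hL
      have hLbdd : BddAbove L := ⟨1, fun t ht => ht.2.1⟩
      set ts := sSup L with hts
      have hts1 : ts ≤ 1 := by
        rcases L.eq_empty_or_nonempty with h | h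
        · rw [hts, h, Real.sSup_empty]; exact zero_le_one
        · exact csSup_le h (fun t ht => ht.2.1)
      have hts0 : 0 ≤ ts := by
        rcases L.eq_empty_or_nonempty with h | h
        · rw [hts, h, Real.sSup_empty]
        · obtain ⟨t, ht⟩ := h
          exact le_trans (le_of_lt ht.1) (le_csSup hLbdd ht)
      have hlight_lt : ∀ t : ℝ, 0 < t → t < ts →
          2 * N (connectedComponentIn ({γ.extend t}ᶜ : Set Γ) Q) ≤ D := by
        intro t h0 hlt
        have hLne : L.Nonempty := by
          rcases L.eq_empty_or_nonempty with h | h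
          · rw [hts, h, Real.sSup_empty] at hlt; linarith
          · exact h
        obtain ⟨t'', ht''L, htt''⟩ := exists_lt_of_lt_csSup hLne hlt
        have h1 := hNmono _ _ (hBmono t t'' h0 (le_of_lt htt'') ht''L.2.1)
        have h2 := ht''L.2.2
        omega
      have hheavy_gt : ∀ t : ℝ, ts < t → t ≤ 1 →
          D < 2 * N (connectedComponentIn ({γ.extend t}ᶜ : Set Γ) Q) := by
        intro t hlt h1
        have h0 : 0 < t := lt_of_le_of_lt hts0 hlt
        by_contra hcon
        push_neg at hcon
        have hmem : t ∈ L := ⟨h0, h1, hcon⟩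
        have := le_csSup hLbdd hmem
        linarith
      -- limit from the left at ts for the Q-side component
      have hBstar : 0 < ts →
          2 * N (connectedComponentIn ({γ.extend ts}ᶜ : Set Γ) Q) ≤ D := by
        intro h0
        have claim : ∀ P : Γ, P ∈ s →
            P ∈ connectedComponentIn ({γ.extend ts}ᶜ : Set Γ) Q →
            ∃ a : ℝ, 0 ≤ a ∧ a < ts ∧ ∀ t : ℝ, a < t → t < ts →
              P ∈ connectedComponentIn ({γ.extend t}ᶜ : Set Γ) Q := by
          intro P hPs hPB
          by_cases hPQ : P = Q
          · exact ⟨0, le_refl 0, h0, fun t h1 h2 => hPQ ▸ hQB t h1 (by linarith)⟩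
          · have hQP : Q ≠ P := Ne.symm hPQ
            obtain ⟨p, hpi, hpr⟩ :=
              chain_arc φ hcov hiso ({γ.extend ts}ᶜ) Q hU_point hPB hQP
            by_contra hcon
            push_neg at hcon
            have hstep : ∀ t : ℝ, 0 < t → t < ts →
                P ∉ connectedComponentIn ({γ.extend t}ᶜ : Set Γ) Q →
                γ.extend t ∈ range ⇑p := by
              intro t h1 h2 hPn
              by_contra hnot
              apply hPn
              have hsub : range ⇑p ⊆ connectedComponentIn ({γ.extend t}ᶜ : Set Γ) Q := by
                apply IsPreconnected.subset_connectedComponentIn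
                  (isPreconnected_range p.continuous) ⟨0, p.source⟩
                intro z hz
                rw [mem_compl_singleton_iff]
                intro he
                exact hnot (he ▸ hz)
              exact hsub ⟨1, p.target⟩
            have hcl : γ.extend ts ∈ range ⇑p := by
              have hZ : IsClosed (γ.extend ⁻¹' (range ⇑p)) :=
                ((isCompact_range p.continuous).isClosed).preimage γ.continuous_extend
              have hmem : ts ∈ closure (γ.extend ⁻¹' (range ⇑p)) := by
                rw [Metric.mem_closure_iff]
                intro ε hε
                obtain ⟨t, hta, hts', hPn⟩ := hcon (max 0 (ts - ε/2)) (le_max_left _ _)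
                  (max_lt h0 (by linarith))
                have h0t : 0 < t := lt_of_le_of_lt (le_max_left 0 _) hta
                refine ⟨t, hstep t h0t hts' hPn, ?_⟩
                have hge : ts - ε/2 ≤ max 0 (ts - ε/2) := le_max_right _ _
                rw [Real.dist_eq, abs_of_pos (by linarith)]
                linarith
              rw [hZ.closure_eq] at hmem
              exact hmem
            exact (hpr hcl) rfl
        choose! a ha0 hats haP using claim
        set Afin := insert (0:ℝ)
          ((s.filter (· ∈ connectedComponentIn ({γ.extend ts}ᶜ : Set Γ) Q)).image a)
          with hAfin
        have hAne : Afin.Nonempty := ⟨0, Finset.mem_insert_self _ _⟩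
        set t0 := Afin.max' hAne with ht0
        have ht0lt : t0 < ts := by
          rw [ht0, Finset.max'_lt_iff]
          intro b hb
          rcases Finset.mem_insert.1 hb with rfl | hb
          · exact h0
          · obtain ⟨P, hP, rfl⟩ := Finset.mem_image.1 hb
            rw [Finset.mem_filter] at hP
            exact hats P hP.1 hP.2
        have ht0nonneg : 0 ≤ t0 := Finset.le_max' _ 0 (Finset.mem_insert_self _ _)
        have hsub : s.filter (· ∈ connectedComponentIn ({γ.extend ts}ᶜ : Set Γ) Q)
            ⊆ s.filter (· ∈ connectedComponentIn ({γ.extend ((t0 + ts)/2)}ᶜ : Set Γ) Q) := by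
          intro P hP
          rw [Finset.mem_filter] at hP ⊢
          refine ⟨hP.1, haP P hP.1 hP.2 _ ?_ ?_⟩
          · have : a P ≤ t0 :=
              Finset.le_max' _ _ (Finset.mem_insert_of_mem
                (Finset.mem_image_of_mem a (Finset.mem_filter.2 hP)))
            linarith
          · linarith
        have h1 : N (connectedComponentIn ({γ.extend ts}ᶜ : Set Γ) Q)
            ≤ N (connectedComponentIn ({γ.extend ((t0 + ts)/2)}ᶜ : Set Γ) Q) :=
          Finset.sum_le_sum_of_subset hsub
        have h2 := hlight_lt ((t0 + ts)/2) (by linarith) (by linarith)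
        omega
      have hFlight : ∀ t : ℝ, ts < t → t < 1 →
          2 * N (connectedComponentIn ({γ.extend t}ᶜ : Set Γ) y) ≤ D := by
        intro t h1 h2
        have h0 : 0 < t := lt_of_le_of_lt hts0 h1
        have hdisj : connectedComponentIn ({γ.extend t}ᶜ : Set Γ) Q
            ∩ connectedComponentIn ({γ.extend t}ᶜ : Set Γ) y = ∅ := by
          ext z
          simp only [mem_inter_iff, mem_empty_iff_false, iff_false, not_and]
          intro h3 h4
          exact hBFdisj t h0 h2 z h3 h4
        have h5 := hNdisj _ _ hdisj
        have h6 := hheavy_gt t h1 (le_of_lt h2)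
        omega
      -- limit from the right at ts for the y-side component
      have hFstar : ts < 1 →
          2 * N (connectedComponentIn ({γ.extend ts}ᶜ : Set Γ) y) ≤ D := by
        intro hts1'
        have claim : ∀ P : Γ, P ∈ s →
            P ∈ connectedComponentIn ({γ.extend ts}ᶜ : Set Γ) y →
            ∃ a : ℝ, ts < a ∧ a ≤ 1 ∧ ∀ t : ℝ, ts < t → t < a →
              P ∈ connectedComponentIn ({γ.extend t}ᶜ : Set Γ) y := by
          intro P hPs hPF
          by_cases hPy : P = y
          · exact ⟨1, hts1', le_refl 1, fun t h1 h2 => hPy ▸ hyF t (le_trans hts0 (le_of_lt h1)) h2⟩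
          · have hyP : y ≠ P := Ne.symm hPy
            obtain ⟨p, hpi, hpr⟩ :=
              chain_arc φ hcov hiso ({γ.extend ts}ᶜ) y hU_point hPF hyP
            by_contra hcon
            push_neg at hcon
            have hstep : ∀ t : ℝ, ts < t → t < 1 →
                P ∉ connectedComponentIn ({γ.extend t}ᶜ : Set Γ) y →
                γ.extend t ∈ range ⇑p := by
              intro t h1 h2 hPn
              by_contra hnot
              apply hPn
              have hsub : range ⇑p ⊆ connectedComponentIn ({γ.extend t}ᶜ : Set Γ) y := by
                apply IsPreconnected.subset_connectedComponentIn
                  (isPreconnected_range p.continuous) ⟨0, p.source⟩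
                intro z hz
                rw [mem_compl_singleton_iff]
                intro he
                exact hnot (he ▸ hz)
              exact hsub ⟨1, p.target⟩
            have hcl : γ.extend ts ∈ range ⇑p := by
              have hZ : IsClosed (γ.extend ⁻¹' (range ⇑p)) :=
                ((isCompact_range p.continuous).isClosed).preimage γ.continuous_extend
              have hmem : ts ∈ closure (γ.extend ⁻¹' (range ⇑p)) := by
                rw [Metric.mem_closure_iff]
                intro ε hε
                obtain ⟨t, hta, hts', hPn⟩ := hcon (min 1 (ts + ε/2))
                  (lt_min hts1' (by linarith)) (min_le_left _ _)
                have ht1 : t < 1 := lt_of_lt_of_le hts' (min_le_left _ _)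
                refine ⟨t, hstep t hta ht1 hPn, ?_⟩
                have hle : t < ts + ε/2 := lt_of_lt_of_le hts' (min_le_right _ _)
                rw [Real.dist_eq, abs_of_neg (by linarith)]
                linarith
              rw [hZ.closure_eq] at hmem
              exact hmem
            exact (hpr hcl) rfl
        choose! a hats ha1 haP using claim
        set Afin := insert (1:ℝ)
          ((s.filter (· ∈ connectedComponentIn ({γ.extend ts}ᶜ : Set Γ) y)).image a)
          with hAfin
        have hAne : Afin.Nonempty := ⟨1, Finset.mem_insert_self _ _⟩
        set t0 := Afin.min' hAne with ht0
        have ht0gt : ts < t0 := by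
          rw [ht0, Finset.lt_min'_iff]
          intro b hb
          rcases Finset.mem_insert.1 hb with rfl | hb
          · exact hts1'
          · obtain ⟨P, hP, rfl⟩ := Finset.mem_image.1 hb
            rw [Finset.mem_filter] at hP
            exact hats P hP.1 hP.2
        have ht0le1 : t0 ≤ 1 := Finset.min'_le _ 1 (Finset.mem_insert_self _ _)
        have hsub : s.filter (· ∈ connectedComponentIn ({γ.extend ts}ᶜ : Set Γ) y)
            ⊆ s.filter (· ∈ connectedComponentIn ({γ.extend ((ts + t0)/2)}ᶜ : Set Γ) y) := by
          intro P hP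
          rw [Finset.mem_filter] at hP ⊢
          refine ⟨hP.1, haP P hP.1 hP.2 _ ?_ ?_⟩
          · linarith
          · have : t0 ≤ a P :=
              Finset.min'_le _ _ (Finset.mem_insert_of_mem
                (Finset.mem_image_of_mem a (Finset.mem_filter.2 hP)))
            linarith
        have h1 : N (connectedComponentIn ({γ.extend ts}ᶜ : Set Γ) y)
            ≤ N (connectedComponentIn ({γ.extend ((ts + t0)/2)}ᶜ : Set Γ) y) :=
          Finset.sum_le_sum_of_subset hsub
        have h2 := hFlight ((ts + t0)/2) (by linarith) (by linarith)
        omega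
      have htspos : 0 < ts := by
        rcases lt_or_eq_of_le hts0 with h | h
        · exact h
        · exfalso
          have h1 := hFstar (by linarith)
          have h2 : γ.extend ts = Q := by rw [← h, hext0]
          rw [h2, hCy] at h1
          omega
      -- decide whether γ.extend ts is a barycenter
      by_cases hgood : ∀ x : Γ, x ≠ γ.extend ts →
          ν (connectedComponentIn ({γ.extend ts}ᶜ : Set Γ) x) ≤ 1/2
      · exact ⟨γ.extend ts, hgood⟩
      · push_neg at hgood
        obtain ⟨x, hxQs, hxheavy⟩ := hgood
        have hxheavy' : D < 2 * N (connectedComponentIn ({γ.extend ts}ᶜ : Set Γ) x) :=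
          (hheavyIff _).1 (not_le.2 hxheavy)
        have hXB : ∀ z : Γ, z ∈ connectedComponentIn ({γ.extend ts}ᶜ : Set Γ) x →
            z ∉ connectedComponentIn ({γ.extend ts}ᶜ : Set Γ) Q := by
          intro z hz1 hz2
          have heq := compIn_eq_of_mem hz1 hz2
          rw [heq] at hxheavy'
          have := hBstar htspos
          omega
        have hXF : ts < 1 → ∀ z : Γ, z ∈ connectedComponentIn ({γ.extend ts}ᶜ : Set Γ) x →
            z ∉ connectedComponentIn ({γ.extend ts}ᶜ : Set Γ) y := by
          intro h1 z hz1 hz2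
          have heq := compIn_eq_of_mem hz1 hz2
          rw [heq] at hxheavy'
          have := hFstar h1
          omega
        have hXC : ∀ z : Γ, z ∈ connectedComponentIn ({γ.extend ts}ᶜ : Set Γ) x →
            z ∈ connectedComponentIn ({Q}ᶜ : Set Γ) y₀ ∧ z ≠ y := by
          intro z hz
          have hzQs : z ≠ γ.extend ts :=
            mem_compl_singleton_iff.1 (connectedComponentIn_subset _ _ hz)
          have hzB := hXB z hz
          constructor
          · by_contra hzC
            by_cases hzQ : z = Q
            · exact hzB (hzQ ▸ hQB ts htspos hts1)
            · have hDzC : ∀ w : Γ, w ∈ connectedComponentIn ({Q}ᶜ : Set Γ) z →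
                  w ∉ connectedComponentIn ({Q}ᶜ : Set Γ) y₀ := by
                intro w hw1 hw2
                have heq := compIn_eq_of_mem hw1 hw2
                apply hzC
                rw [← heq]
                exact mem_connectedComponentIn (mem_compl_singleton_iff.2 hzQ)
              have hpre := comp_union_point hpath hzQ
              have hsubset : connectedComponentIn ({Q}ᶜ : Set Γ) z ∪ {Q}
                  ⊆ ({γ.extend ts}ᶜ : Set Γ) := by
                intro w hw
                rw [mem_compl_singleton_iff]
                rcases hw with hw | hw
                · intro he
                  exact hDzC w hw (he ▸ hγC ts htspos hts1)
                · rw [mem_singleton_iff] at hw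
                  rw [hw]
                  exact hQne ts htspos hts1
              have hzB' : z ∈ connectedComponentIn ({γ.extend ts}ᶜ : Set Γ) Q := by
                have hsub2 := IsPreconnected.subset_connectedComponentIn hpre
                  (show Q ∈ connectedComponentIn ({Q}ᶜ : Set Γ) z ∪ {Q} from Or.inr rfl)
                  hsubset
                exact hsub2 (Or.inl (mem_connectedComponentIn (mem_compl_singleton_iff.2 hzQ)))
              exact hzB hzB'
          · rcases lt_or_eq_of_le hts1 with h | h
            · intro he
              exact (hXF h z hz) (he ▸ hyF ts hts0 h)
            · intro he
              apply hzQs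
              rw [he, h]
              exact hext1.symm
        -- recurse
        apply ih (γ.extend ts) x hxQs (not_le.2 hxheavy)
        have hsubfin : s.filter (· ∈ connectedComponentIn ({γ.extend ts}ᶜ : Set Γ) x)
            ⊆ (s.filter (· ∈ connectedComponentIn ({Q}ᶜ : Set Γ) y₀)).erase y := by
          intro P hP
          rw [Finset.mem_filter] at hP
          rw [Finset.mem_erase, Finset.mem_filter]
          obtain ⟨h5, h6⟩ := hXC P hP.2
          exact ⟨h6, hP.1, h5⟩
        have h7 := Finset.card_le_card hsubfin
        have h8 : ((s.filter (· ∈ connectedComponentIn ({Q}ᶜ : Set Γ) y₀)).erase y).card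
            = (s.filter (· ∈ connectedComponentIn ({Q}ᶜ : Set Γ) y₀)).card - 1 :=
          Finset.card_erase_of_mem (Finset.mem_filter.2 ⟨hys, hyC⟩)
        have h9 : 1 ≤ (s.filter (· ∈ connectedComponentIn ({Q}ᶜ : Set Γ) y₀)).card :=
          Finset.card_pos.2 ⟨y, Finset.mem_filter.2 ⟨hys, hyC⟩⟩
        omega
  -- EXISTENCE
  have hex : ∃ Qb : Γ, ∀ x : Γ, x ≠ Qb →
      ν (connectedComponentIn ({Qb}ᶜ : Set Γ) x) ≤ 1/2 := by
    by_cases h : ∀ x : Γ, x ≠ hne.some →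
        ν (connectedComponentIn ({hne.some}ᶜ : Set Γ) x) ≤ 1/2
    · exact ⟨hne.some, h⟩
    · push_neg at h
      obtain ⟨x, hx1, hx2⟩ := h
      exact main s.card hne.some x hx1 (not_le.2 hx2)
        (Finset.card_le_card (Finset.filter_subset _ _))
  -- UNIQUENESS
  obtain ⟨Q, hQ⟩ := hex
  refine ⟨Q, hQ, ?_⟩
  intro Q' hQ'
  by_contra hne'
  have hQ'Q : Q' ≠ Q := hne'
  have hQQ' : Q ≠ Q' := Ne.symm hne'
  have hQ'C : Q' ∈ connectedComponentIn ({Q}ᶜ : Set Γ) Q' :=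
    mem_connectedComponentIn (mem_compl_singleton_iff.2 hQ'Q)
  have hsub : (connectedComponentIn ({Q}ᶜ : Set Γ) Q')ᶜ
      ⊆ connectedComponentIn ({Q'}ᶜ : Set Γ) Q := by
    intro z hz
    by_cases hzQ : z = Q
    · rw [hzQ]
      exact mem_connectedComponentIn (mem_compl_singleton_iff.2 hQQ')
    · have hzC : z ∉ connectedComponentIn ({Q}ᶜ : Set Γ) Q' := hz
      have hDzC : ∀ w : Γ, w ∈ connectedComponentIn ({Q}ᶜ : Set Γ) z →
          w ∉ connectedComponentIn ({Q}ᶜ : Set Γ) Q' := by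
        intro w hw1 hw2
        have heq := compIn_eq_of_mem hw1 hw2
        apply hzC
        rw [← heq]
        exact mem_connectedComponentIn (mem_compl_singleton_iff.2 hzQ)
      have hpre := comp_union_point hpath hzQ
      have hsubset : connectedComponentIn ({Q}ᶜ : Set Γ) z ∪ {Q} ⊆ ({Q'}ᶜ : Set Γ) := by
        intro w hw
        rw [mem_compl_singleton_iff]
        rcases hw with hw | hw
        · intro he
          exact hDzC w hw (he ▸ hQ'C)
        · rw [mem_singleton_iff] at hw
          rw [hw]
          exact hQQ'
      have hsub2 := IsPreconnected.subset_connectedComponentIn hpre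
        (show Q ∈ connectedComponentIn ({Q}ᶜ : Set Γ) z ∪ {Q} from Or.inr rfl) hsubset
      exact hsub2 (Or.inl (mem_connectedComponentIn (mem_compl_singleton_iff.2 hzQ)))
  have h1 := hQ Q' hQ'Q
  have h2 := (hhalf _).1 h1
  have h3 := hQ' Q hQQ'
  have h4 := (hhalf _).1 h3
  have h5 := hNmono _ _ hsub
  have h6 := hNcover (connectedComponentIn ({Q}ᶜ : Set Γ) Q')
    (connectedComponentIn ({Q'}ᶜ : Set Γ) Q) (fun z => by
      by_cases hz : z ∈ connectedComponentIn ({Q}ᶜ : Set Γ) Q'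
      · exact Or.inl hz
      · exact Or.inr (hsub hz))
  omega

open MeasureTheory in
/-- On a finite metric tree, if the masses of a finitely supported probability measure ν
are all integer multiples of 1/(d−1) with d even, then the barycenter of ν consists of a
single point. -/
theorem stmt_9 {Γ : Type*} [MetricSpace Γ] [CompactSpace Γ]
    [MeasurableSpace Γ] [BorelSpace Γ]
    (hpath : ∀ x y : Γ, Joined x y)
    (huniq : ∀ (x y : Γ) (p q : Path x y), Function.Injective p →
      Function.Injective q → Set.range p = Set.range q)
    (hsegs : ∃ (n : ℕ) (φ : Fin n → Set Γ), (⋃ i, φ i) = Set.univ ∧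
      ∀ i, ∃ (a b : ℝ) (e : Set.Icc a b → Γ), Isometry e ∧ Set.range e = φ i)
    (ν : Measure Γ) [IsProbabilityMeasure ν]
    (hfin : ∃ s : Finset Γ, ν ((s : Set Γ))ᶜ = 0)
    (d : ℕ) (hd : 2 ≤ d) (heven : Even d)
    (hmass : ∀ P : Γ, ∃ k : ℕ, ν {P} = (k : ENNReal) / ((d : ENNReal) - 1)) :
    ∃! Q : Γ, ∀ x : Γ, x ≠ Q →
      ν (connectedComponentIn ({Q}ᶜ : Set Γ) x) ≤ 1 / 2 := by
  exact TreeBary.stmt_9_aux hpath huniq hsegs ν hfin d hd heven hmass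
end
end

section
/- Let k be an algebraically closed field, δ ≥ 2, and let φ̃ : P¹(k) → P¹(k) be a rational map of degree δ given by coprime homogeneous forms (F₀, G₀) of degree δ. If φ̃ has exactly one fixed point a ∈ P¹(k), then a is a fixed point of multiplicity δ + 1, the multiplier of φ̃ at a is 1, and a is not a critical point of φ̃ (the local degree of φ̃ at a is 1). -/
open MvPolynomial

namespace Stmt16Aux

variable {k : Type*} [Field k]

lemma degree_two (v : Fin 2 →₀ ℕ) : v.degree = v 0 + v 1 := by
  rw [Finsupp.degree_apply, Finset.sum_subset (Finset.subset_univ _), Fin.sum_univ_two]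
  intro i _ hi
  exact Finsupp.notMem_support_iff.mp hi

lemma monomial_two_eq (v : Fin 2 →₀ ℕ) (c : k) :
    (monomial v c : MvPolynomial (Fin 2) k) = C c * X 0 ^ v 0 * X 1 ^ v 1 := by
  rw [monomial_eq, Finsupp.prod_fintype, Fin.prod_univ_two, mul_assoc]
  intro i; exact pow_zero _

lemma eval_monomial_two (v : Fin 2 →₀ ℕ) (c x y : k) :
    eval ![x, y] (monomial v c) = c * x ^ v 0 * y ^ v 1 := by
  rw [monomial_two_eq]
  simp

lemma supp_deg {n : ℕ} {p : MvPolynomial (Fin 2) k} (hp : p.IsHomogeneous n)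
    {v : Fin 2 →₀ ℕ} (hv : v ∈ p.support) : v 0 + v 1 = n := by
  rw [← degree_two]
  by_contra h
  exact (mem_support_iff.mp hv) (hp.coeff_eq_zero h)

lemma eval_scale {n : ℕ} {p : MvPolynomial (Fin 2) k} (hp : p.IsHomogeneous n)
    (t x y : k) : eval ![t * x, t * y] p = t ^ n * eval ![x, y] p := by
  conv_lhs => rw [← support_sum_monomial_coeff p]
  conv_rhs => rw [← support_sum_monomial_coeff p]
  rw [map_sum, map_sum, Finset.mul_sum]
  refine Finset.sum_congr rfl fun v hv => ?_
  rw [eval_monomial_two, eval_monomial_two, ← supp_deg hp hv, mul_pow, mul_pow, pow_add]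
  ring

lemma euler_aux0 (v : Fin 2 →₀ ℕ) (c x y : k) :
    x * eval ![x, y] (pderiv 0 (monomial v c)) = (v 0 : k) * (c * x ^ v 0 * y ^ v 1) := by
  rw [pderiv_monomial, eval_monomial_two]
  have h0 : ((v - Finsupp.single 0 1 : Fin 2 →₀ ℕ)) 0 = v 0 - 1 := by
    rw [Finsupp.tsub_apply, Finsupp.single_eq_same]
  have h1 : ((v - Finsupp.single 0 1 : Fin 2 →₀ ℕ)) 1 = v 1 := by
    rw [Finsupp.tsub_apply, Finsupp.single_eq_of_ne (by decide), tsub_zero]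
  rw [h0, h1]
  cases hv : v 0 with
  | zero => simp [hv]
  | succ m => rw [Nat.add_sub_cancel]; push_cast; ring

lemma euler_aux1 (v : Fin 2 →₀ ℕ) (c x y : k) :
    y * eval ![x, y] (pderiv 1 (monomial v c)) = (v 1 : k) * (c * x ^ v 0 * y ^ v 1) := by
  rw [pderiv_monomial, eval_monomial_two]
  have h0 : ((v - Finsupp.single 1 1 : Fin 2 →₀ ℕ)) 0 = v 0 := by
    rw [Finsupp.tsub_apply, Finsupp.single_eq_of_ne (by decide), tsub_zero]
  have h1 : ((v - Finsupp.single 1 1 : Fin 2 →₀ ℕ)) 1 = v 1 - 1 := by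
    rw [Finsupp.tsub_apply, Finsupp.single_eq_same]
  rw [h0, h1]
  cases hv : v 1 with
  | zero => simp [hv]
  | succ m => rw [Nat.add_sub_cancel]; push_cast; ring

lemma euler_eval {n : ℕ} {p : MvPolynomial (Fin 2) k} (hp : p.IsHomogeneous n) (x y : k) :
    x * eval ![x, y] (pderiv 0 p) + y * eval ![x, y] (pderiv 1 p) = (n : k) * eval ![x, y] p := by
  conv_lhs => rw [← support_sum_monomial_coeff p]
  conv_rhs => rw [← support_sum_monomial_coeff p]
  simp only [map_sum, Finset.mul_sum]
  rw [← Finset.sum_add_distrib]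
  refine Finset.sum_congr rfl fun v hv => ?_
  rw [euler_aux0, euler_aux1, eval_monomial_two, ← supp_deg hp hv]
  push_cast
  ring

lemma eval_aeval_pair (p : MvPolynomial (Fin 2) k) (u v : Polynomial k) (t : k) :
    Polynomial.eval t (aeval ![u, v] p) = eval ![Polynomial.eval t u, Polynomial.eval t v] p := by
  induction p using MvPolynomial.induction_on with
  | C c => simp
  | add p q hp hq => simp [hp, hq]
  | mul_X p i hp => fin_cases i <;> simp [hp]


lemma eval_L (a b : k) : eval ![a, b] (C b * X 0 - C a * X 1) = 0 := by
  simp only [map_sub, map_mul, eval_C, eval_X, Matrix.cons_val_zero, Matrix.cons_val_one,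
    Matrix.head_cons]
  ring

lemma L_not_unit (a b : k) : ¬ IsUnit (C b * X 0 - C a * X 1 : MvPolynomial (Fin 2) k) := by
  intro h
  obtain ⟨u, hu⟩ := h
  have h1 : (u : MvPolynomial (Fin 2) k) * ↑u⁻¹ = 1 := u.mul_inv
  rw [hu] at h1
  have h2 := congrArg (eval ![a, b]) h1
  rw [map_mul, eval_L, zero_mul, map_one] at h2
  exact zero_ne_one h2

lemma L_ne_zero {a b : k} (hab : ¬(a = 0 ∧ b = 0)) :
    (C b * X 0 - C a * X 1 : MvPolynomial (Fin 2) k) ≠ 0 := by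
  intro h
  apply hab
  constructor
  · have h2 := congrArg (eval ![0, 1]) h
    simpa [neg_eq_zero] using h2
  · have h2 := congrArg (eval ![1, 0]) h
    simpa using h2

lemma key1 (a b : k) {n : ℕ} (v : Fin 2 →₀ ℕ) (c : k) (hv : v 0 + v 1 = n) :
    (C b * X 0 - C a * X 1) ∣
      (C b) ^ n * monomial v c - C (c * a ^ v 0 * b ^ v 1) * (X 1 : MvPolynomial (Fin 2) k) ^ n := by
  obtain ⟨w, hw⟩ := sub_dvd_pow_sub_pow (C b * X 0 : MvPolynomial (Fin 2) k) (C a * X 1) (v 0)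
  refine ⟨C c * (C b) ^ v 1 * (X 1) ^ v 1 * w, ?_⟩
  rw [monomial_two_eq, ← hv]
  simp only [map_mul, map_pow]
  linear_combination (C c * (C b : MvPolynomial (Fin 2) k) ^ v 1 * (X 1) ^ v 1) * hw

lemma key2 (a b : k) {n : ℕ} (v : Fin 2 →₀ ℕ) (c : k) (hv : v 0 + v 1 = n) :
    (C b * X 0 - C a * X 1) ∣
      (C a) ^ n * monomial v c - C (c * a ^ v 0 * b ^ v 1) * (X 0 : MvPolynomial (Fin 2) k) ^ n := by
  obtain ⟨w, hw⟩ := sub_dvd_pow_sub_pow (C b * X 0 : MvPolynomial (Fin 2) k) (C a * X 1) (v 1)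
  refine ⟨-(C c * (C a) ^ v 0 * (X 0) ^ v 0 * w), ?_⟩
  rw [monomial_two_eq, ← hv]
  simp only [map_mul, map_pow]
  linear_combination (-(C c * (C a : MvPolynomial (Fin 2) k) ^ v 0 * (X 0) ^ v 0)) * hw

lemma linear_dvd {n : ℕ} {p : MvPolynomial (Fin 2) k} (hp : p.IsHomogeneous n)
    (a b : k) (hab : ¬(a = 0 ∧ b = 0)) (h0 : eval ![a, b] p = 0) :
    (C b * X 0 - C a * X 1) ∣ p := by
  have hev : ∑ v ∈ p.support, coeff v p * a ^ v 0 * b ^ v 1 = 0 := by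
    rw [← h0]
    conv_rhs => rw [← support_sum_monomial_coeff p]
    rw [map_sum]
    exact Finset.sum_congr rfl fun v _ => (eval_monomial_two v (coeff v p) a b).symm
  rcases not_and_or.mp hab with ha | hb
  · have big : (C b * X 0 - C a * X 1) ∣ (C a : MvPolynomial (Fin 2) k) ^ n * p := by
      have heq : (C a : MvPolynomial (Fin 2) k) ^ n * p =
          ∑ v ∈ p.support, ((C a : MvPolynomial (Fin 2) k) ^ n * monomial v (coeff v p)
            - C (coeff v p * a ^ v 0 * b ^ v 1) * (X 0 : MvPolynomial (Fin 2) k) ^ n) := by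
        rw [Finset.sum_sub_distrib, ← Finset.mul_sum, support_sum_monomial_coeff]
        have hz : ∑ v ∈ p.support,
            C (coeff v p * a ^ v 0 * b ^ v 1) * (X 0 : MvPolynomial (Fin 2) k) ^ n = 0 := by
          rw [← Finset.sum_mul, ← map_sum, hev, map_zero, zero_mul]
        rw [hz, sub_zero]
      rw [heq]
      exact Finset.dvd_sum fun v hv => key2 a b v (coeff v p) (supp_deg hp hv)
    obtain ⟨u, hu⟩ := ((isUnit_iff_ne_zero.mpr ha).map (C : k →+* MvPolynomial (Fin 2) k)).pow n
    rw [← hu] at big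
    exact Units.dvd_mul_left.mp big
  · have big : (C b * X 0 - C a * X 1) ∣ (C b : MvPolynomial (Fin 2) k) ^ n * p := by
      have heq : (C b : MvPolynomial (Fin 2) k) ^ n * p =
          ∑ v ∈ p.support, ((C b : MvPolynomial (Fin 2) k) ^ n * monomial v (coeff v p)
            - C (coeff v p * a ^ v 0 * b ^ v 1) * (X 1 : MvPolynomial (Fin 2) k) ^ n) := by
        rw [Finset.sum_sub_distrib, ← Finset.mul_sum, support_sum_monomial_coeff]
        have hz : ∑ v ∈ p.support,
            C (coeff v p * a ^ v 0 * b ^ v 1) * (X 1 : MvPolynomial (Fin 2) k) ^ n = 0 := by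
          rw [← Finset.sum_mul, ← map_sum, hev, map_zero, zero_mul]
        rw [hz, sub_zero]
      rw [heq]
      exact Finset.dvd_sum fun v hv => key1 a b v (coeff v p) (supp_deg hp hv)
    obtain ⟨u, hu⟩ := ((isUnit_iff_ne_zero.mpr hb).map (C : k →+* MvPolynomial (Fin 2) k)).pow n
    rw [← hu] at big
    exact Units.dvd_mul_left.mp big


lemma isHomogeneous_of_mul {i n : ℕ} {p q : MvPolynomial (Fin 2) k}
    (hp : p.IsHomogeneous i) (hpq : (p * q).IsHomogeneous n) (hp0 : p ≠ 0) (hin : i ≤ n) :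
    q.IsHomogeneous (n - i) := by
  have comp : ∀ j : ℕ, j ≤ q.totalDegree →
      p * homogeneousComponent j q = homogeneousComponent (i + j) (p * q) := by
    intro j hj
    have hsum : p * q = ∑ j' ∈ Finset.range (q.totalDegree + 1),
        p * homogeneousComponent j' q := by
      rw [← Finset.mul_sum, sum_homogeneousComponent]
    rw [hsum, map_sum]
    rw [Finset.sum_congr rfl (fun j' _ =>
      homogeneousComponent_of_mem (hp.mul (homogeneousComponent_isHomogeneous j' q)))]
    simp only [add_right_inj]
    rw [Finset.sum_ite_eq (Finset.range (q.totalDegree + 1)) j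
      (fun j' => p * homogeneousComponent j' q), if_pos (Finset.mem_range.mpr (by omega))]
  have key : ∀ j, j ≠ n - i → homogeneousComponent j q = 0 := by
    intro j hj
    rcases le_or_gt j q.totalDegree with hle | hlt
    · by_contra hne
      have h2 := comp j hle
      have h3 : homogeneousComponent (i + j) (p * q) = 0 := by
        rw [homogeneousComponent_of_mem hpq, if_neg (by omega)]
      rw [h3] at h2
      rcases mul_eq_zero.mp h2 with h | h
      · exact hp0 h
      · exact hne h
    · exact homogeneousComponent_eq_zero _ _ hlt
  have hq : q = homogeneousComponent (n - i) q := by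
    conv_lhs => rw [← sum_homogeneousComponent q]
    apply Finset.sum_eq_single
    · exact fun j _ hj => key j hj
    · intro h
      simp only [Finset.mem_range, not_lt] at h
      exact homogeneousComponent_eq_zero _ _ (by omega)
  exact hq ▸ homogeneousComponent_isHomogeneous (n - i) q

lemma exists_proj_zero [IsAlgClosed k] {m : ℕ} {p : MvPolynomial (Fin 2) k}
    (hp : p.IsHomogeneous m) (hm : 0 < m) (hp0 : p ≠ 0) :
    ∃ x y : k, ¬(x = 0 ∧ y = 0) ∧ eval ![x, y] p = 0 := by
  set h : Polynomial k := aeval ![Polynomial.X, 1] p with hh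
  have hev : ∀ t : k, Polynomial.eval t h = eval ![t, 1] p := by
    intro t
    rw [hh, eval_aeval_pair]
    simp
  by_cases hdeg : h.natDegree = 0
  · have hC : h = Polynomial.C (h.coeff 0) := Polynomial.eq_C_of_natDegree_eq_zero hdeg
    refine ⟨1, 0, by simp, ?_⟩
    set q : Polynomial k := aeval ![1, Polynomial.X] p with hq
    have hqe : ∀ t : k, Polynomial.eval t q = eval ![1, t] p := by
      intro t
      rw [hq, eval_aeval_pair]
      simp
    have hkey : q - Polynomial.C (h.coeff 0) * Polynomial.X ^ m = 0 := by
      apply Polynomial.eq_zero_of_infinite_isRoot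
      have hinf : ({0}ᶜ : Set k).Infinite := Set.Finite.infinite_compl (Set.finite_singleton 0)
      refine hinf.mono ?_
      intro t ht
      have ht' : t ≠ 0 := ht
      simp only [Set.mem_setOf_eq, Polynomial.IsRoot, Polynomial.eval_sub, Polynomial.eval_mul,
        Polynomial.eval_pow, Polynomial.eval_C, Polynomial.eval_X]
      have h1 : eval ![1, t] p = t ^ m * eval ![t⁻¹, 1] p := by
        have h2 := eval_scale hp t t⁻¹ 1
        rwa [mul_inv_cancel₀ ht', mul_one] at h2
      rw [hqe, h1, ← hev, hC, Polynomial.eval_C, Polynomial.coeff_C_zero]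
      ring
    have hq0 : Polynomial.eval 0 q = 0 := by
      have hq2 : q = Polynomial.C (h.coeff 0) * Polynomial.X ^ m := sub_eq_zero.mp hkey
      rw [hq2]
      simp [zero_pow hm.ne']
    rw [← hqe 0]
    exact hq0
  · have hd : h.degree ≠ 0 := fun hd =>
      hdeg (Polynomial.natDegree_eq_zero_iff_degree_le_zero.mpr (le_of_eq hd))
    obtain ⟨t, ht⟩ := IsAlgClosed.exists_root h hd
    exact ⟨t, 1, by simp, by rw [← hev t]; exact ht⟩

lemma factor_unique_zero [IsAlgClosed k] (a b : k) (hab : ¬(a = 0 ∧ b = 0)) :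
    ∀ (m : ℕ) (H : MvPolynomial (Fin 2) k), H.IsHomogeneous m → H ≠ 0 →
      (∀ x y : k, ¬(x = 0 ∧ y = 0) → eval ![x, y] H = 0 →
        ∃ t : k, t ≠ 0 ∧ x = t * a ∧ y = t * b) →
      ∃ c : k, c ≠ 0 ∧ H = C c * (C b * X 0 - C a * X 1) ^ m := by
  intro m
  induction m with
  | zero =>
    intro H hH hne _
    have h1 := homogeneousComponent_of_mem (m := 0) (n := 0) ((mem_homogeneousSubmodule 0 H).mpr hH)
    rw [if_pos rfl] at h1
    have hC : H = C (coeff 0 H) := by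
      conv_lhs => rw [← h1, homogeneousComponent_zero]
    exact ⟨coeff 0 H, fun h => hne (by rw [hC, h, map_zero]), by rw [pow_zero, mul_one, ← hC]⟩
  | succ m ih =>
    intro H hH hne huniq
    obtain ⟨x, y, hxy, hzero⟩ := exists_proj_zero hH (Nat.succ_pos m) hne
    obtain ⟨t, ht, rfl, rfl⟩ := huniq x y hxy hzero
    have hroot : eval ![a, b] H = 0 := by
      have hs := eval_scale hH t a b
      rw [hzero] at hs
      exact (mul_eq_zero.mp hs.symm).resolve_left (pow_ne_zero _ ht)
    obtain ⟨Q, hQ⟩ := linear_dvd hH a b hab hroot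
    have hL0 : (C b * X 0 - C a * X 1 : MvPolynomial (Fin 2) k) ≠ 0 := L_ne_zero hab
    have hQ0 : Q ≠ 0 := fun h => hne (by rw [hQ, h, mul_zero])
    have hLhom : (C b * X 0 - C a * X 1 : MvPolynomial (Fin 2) k).IsHomogeneous 1 :=
      (isHomogeneous_C_mul_X b 0).sub (isHomogeneous_C_mul_X a 1)
    have hQhom : Q.IsHomogeneous m := by
      have h2 := isHomogeneous_of_mul hLhom (hQ ▸ hH) hL0 (by omega)
      simpa using h2
    have huniqQ : ∀ x y : k, ¬(x = 0 ∧ y = 0) → eval ![x, y] Q = 0 →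
        ∃ t : k, t ≠ 0 ∧ x = t * a ∧ y = t * b :=
      fun x y h hz => huniq x y h (by rw [hQ, map_mul, hz, mul_zero])
    obtain ⟨c, hc0, hc⟩ := ih Q hQhom hQ0 huniqQ
    exact ⟨c, hc0, by rw [hQ, hc]; ring⟩

end Stmt16Aux

open Stmt16Aux

open MvPolynomial in
/-- If a degree-`δ ≥ 2` rational map `φ̃ = (F₀ : G₀)` on `P¹(k)` (coprime homogeneous
forms, `k` algebraically closed) has exactly one fixed point `(a : b)` — the unique
projective zero of `H₀ = X·G₀ − Y·F₀` — then `(a : b)` is a fixed point of multiplicity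
`δ + 1` (i.e. `H₀ = c (bX − aY)^{δ+1}`), the multiplier of `φ̃` at it is `1`
(chart-free: with `F₀(a,b) = μa`, `G₀(a,b) = μb`, the trace `∂_X F₀ + ∂_Y G₀` at `(a,b)`
equals `(δ+1)μ`), and it is not a critical point (the fiber polynomial
`b·F₀ − a·G₀` is not divisible by `(bX − aY)²`, i.e. the local degree is `1`). -/
theorem stmt_16 {k : Type*} [Field k] [IsAlgClosed k] (δ : ℕ) (hδ : 2 ≤ δ)
    (F₀ G₀ : MvPolynomial (Fin 2) k)
    (hF : F₀.IsHomogeneous δ) (hG : G₀.IsHomogeneous δ)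
    (hcop : ∀ D : MvPolynomial (Fin 2) k, D ∣ F₀ → D ∣ G₀ → IsUnit D)
    (H₀ : MvPolynomial (Fin 2) k) (hH : H₀ = X 0 * G₀ - X 1 * F₀) (hH0 : H₀ ≠ 0)
    (a b : k) (hab : ¬(a = 0 ∧ b = 0)) (hroot : eval ![a, b] H₀ = 0)
    (huniq : ∀ a' b' : k, ¬(a' = 0 ∧ b' = 0) → eval ![a', b'] H₀ = 0 →
      ∃ t : k, t ≠ 0 ∧ a' = t * a ∧ b' = t * b) :
    ∃ (c μ : k), c ≠ 0 ∧ μ ≠ 0 ∧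
      H₀ = C c * (C b * X 0 - C a * X 1) ^ (δ + 1) ∧
      eval ![a, b] F₀ = μ * a ∧ eval ![a, b] G₀ = μ * b ∧
      eval ![a, b] (pderiv 0 F₀) + eval ![a, b] (pderiv 1 G₀) = ((δ : k) + 1) * μ ∧
      ¬ ((C b * X 0 - C a * X 1) ^ 2 ∣ (C b * F₀ - C a * G₀)) := by
  have hHhom : H₀.IsHomogeneous (δ + 1) := by
    rw [hH]
    have h1 := (isHomogeneous_X (R := k) (0 : Fin 2)).mul hG
    have h2 := (isHomogeneous_X (R := k) (1 : Fin 2)).mul hF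
    have h3 := h1.sub h2
    rwa [add_comm] at h3
  obtain ⟨c, hc0, hfac⟩ := factor_unique_zero a b hab (δ + 1) H₀ hHhom hH0 huniq
  have hlin : a * eval ![a, b] G₀ - b * eval ![a, b] F₀ = 0 := by
    have h := hroot
    rw [hH] at h
    simp only [map_sub, map_mul, eval_X, Matrix.cons_val_zero, Matrix.cons_val_one,
      Matrix.head_cons] at h
    linear_combination h
  have hFG : ¬(eval ![a, b] F₀ = 0 ∧ eval ![a, b] G₀ = 0) := by
    rintro ⟨hF0, hG0⟩
    exact L_not_unit a b (hcop _ (linear_dvd hF a b hab hF0) (linear_dvd hG a b hab hG0))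
  obtain ⟨μ, hFa, hGb⟩ : ∃ μ : k, eval ![a, b] F₀ = μ * a ∧ eval ![a, b] G₀ = μ * b := by
    rcases not_and_or.mp hab with ha | hb
    · refine ⟨eval ![a, b] F₀ / a, (div_mul_cancel₀ _ ha).symm, ?_⟩
      apply mul_left_cancel₀ ha
      rw [show a * (eval ![a, b] F₀ / a * b) = eval ![a, b] F₀ * b by field_simp]
      linear_combination hlin
    · refine ⟨eval ![a, b] G₀ / b, ?_, (div_mul_cancel₀ _ hb).symm⟩
      apply mul_left_cancel₀ hb
      rw [show b * (eval ![a, b] G₀ / b * a) = eval ![a, b] G₀ * a by field_simp]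
      linear_combination -hlin
  have hμ0 : μ ≠ 0 := by
    rintro rfl
    exact hFG ⟨by rw [hFa, zero_mul], by rw [hGb, zero_mul]⟩
  have hδ1 : δ ≠ 0 := by omega
  have hd0 : eval ![a, b] (pderiv 0 H₀) = 0 := by
    rw [hfac, pderiv_C_mul, pderiv_pow, Nat.add_sub_cancel]
    simp only [map_mul]
    rw [map_pow, eval_L, zero_pow hδ1]
    ring
  have hd1 : eval ![a, b] (pderiv 1 H₀) = 0 := by
    rw [hfac, pderiv_C_mul, pderiv_pow, Nat.add_sub_cancel]
    simp only [map_mul]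
    rw [map_pow, eval_L, zero_pow hδ1]
    ring
  have hrel0 : eval ![a, b] G₀ + a * eval ![a, b] (pderiv 0 G₀)
      - b * eval ![a, b] (pderiv 0 F₀) = 0 := by
    have h := hd0
    rw [hH, map_sub, pderiv_mul, pderiv_mul, pderiv_X_self,
      pderiv_X_of_ne (show (1 : Fin 2) ≠ 0 by decide)] at h
    simp only [one_mul, zero_mul, zero_add, map_sub, map_add, map_mul, eval_X,
      Matrix.cons_val_zero, Matrix.cons_val_one, Matrix.head_cons] at h
    linear_combination h
  have hrel1 : a * eval ![a, b] (pderiv 1 G₀) - eval ![a, b] F₀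
      - b * eval ![a, b] (pderiv 1 F₀) = 0 := by
    have h := hd1
    rw [hH, map_sub, pderiv_mul, pderiv_mul, pderiv_X_self,
      pderiv_X_of_ne (show (0 : Fin 2) ≠ 1 by decide)] at h
    simp only [one_mul, zero_mul, zero_add, map_sub, map_add, map_mul, eval_X,
      Matrix.cons_val_zero, Matrix.cons_val_one, Matrix.head_cons] at h
    linear_combination h
  have htr : eval ![a, b] (pderiv 0 F₀) + eval ![a, b] (pderiv 1 G₀) = ((δ : k) + 1) * μ := by
    rcases not_and_or.mp hab with ha | hb
    · apply mul_left_cancel₀ ha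
      linear_combination euler_eval hF a b + hrel1 + ((δ : k) + 1) * hFa
    · apply mul_left_cancel₀ hb
      linear_combination euler_eval hG a b - hrel0 + ((δ : k) + 1) * hGb
  have hnc : ¬ ((C b * X 0 - C a * X 1) ^ 2 ∣ (C b * F₀ - C a * G₀)) := by
    obtain ⟨d, rfl⟩ : ∃ d, δ = d + 2 := ⟨δ - 2, by omega⟩
    rintro ⟨Q, hQ⟩
    have hL0 : (C b * X 0 - C a * X 1 : MvPolynomial (Fin 2) k) ≠ 0 := L_ne_zero hab
    have hF' : F₀ = X 0 * (C b * X 0 - C a * X 1) * Q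
        + C a * C c * (C b * X 0 - C a * X 1) ^ (d + 2) := by
      apply mul_left_cancel₀ hL0
      linear_combination (X 0 : MvPolynomial (Fin 2) k) * hQ + C a * hfac - C a * hH
    have hdF : (C b * X 0 - C a * X 1) ∣ F₀ :=
      ⟨X 0 * Q + C a * C c * (C b * X 0 - C a * X 1) ^ (d + 1), by rw [hF']; ring⟩
    have hG' : G₀ = X 1 * (C b * X 0 - C a * X 1) * Q
        + C b * C c * (C b * X 0 - C a * X 1) ^ (d + 2) := by
      apply mul_left_cancel₀ hL0
      linear_combination (X 1 : MvPolynomial (Fin 2) k) * hQ + C b * hfac - C b * hH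
    have hdG : (C b * X 0 - C a * X 1) ∣ G₀ :=
      ⟨X 1 * Q + C b * C c * (C b * X 0 - C a * X 1) ^ (d + 1), by rw [hG']; ring⟩
    exact L_not_unit a b (hcop _ hdF hdG)
  exact ⟨c, μ, hc0, hμ0, hfac, hFa, hGb, htr, hnc⟩
end
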